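/- Suppose there are constants 0 < Z_L ≤ Z_U and 0 < M_L ≤ M_U and M₃ > 0 such that Z_L ≤ z ≤ Z_U, M_L ≤ m ≤ M_U and |m_x| ≤ M₃ on U, and let (t₀,x₀) ∈ ℝ². Then the following are equivalent: (i) for every neighborhood V of (t₀,x₀), the function |u_x| + |τ_x| is unbounded on V ∩ U; (ii) for every neighborhood V of (t₀,x₀), the function |y| + |q| is unbounded on V ∩ U. (Corollary 6.1: |y| or |q| tends to infinity approaching a point if and only if |u_x| or |τ_x| does.) -/

import Mathlib

open Real

/-- Partial derivative with respect to `t` (the first coordinate). -/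
noncomputable def pdt (f : ℝ × ℝ → ℝ) (pt : ℝ × ℝ) : ℝ := fderiv ℝ f pt (1, 0)

/-- Partial derivative with respect to `x` (the second coordinate). -/
noncomputable def pdx (f : ℝ × ℝ → ℝ) (pt : ℝ × ℝ) : ℝ := fderiv ℝ f pt (0, 1)


private lemma rpow_bnd_aux {s lo hi x : ℝ} (hlo : 0 < lo) (h1 : lo ≤ x) (h2 : x ≤ hi) :
    min (lo ^ s) (hi ^ s) ≤ x ^ s ∧ x ^ s ≤ max (lo ^ s) (hi ^ s) := by
  rcases le_total 0 s with hs | hs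
  · exact ⟨(min_le_left _ _).trans (Real.rpow_le_rpow hlo.le h1 hs),
      (Real.rpow_le_rpow (hlo.le.trans h1) h2 hs).trans (le_max_right _ _)⟩
  · exact ⟨(min_le_right _ _).trans (Real.rpow_le_rpow_of_nonpos (hlo.trans_le h1) h2 hs),
      (Real.rpow_le_rpow_of_nonpos hlo h1 hs).trans (le_max_left _ _)⟩

set_option maxHeartbeats 1000000 in
/-- Corollary 6.1: under uniform bounds on `z`, `m`, `m_x`,
`|u_x| + |τ_x|` is unbounded near a point iff `|y| + |q|` is. -/
theorem stmt_11
    (γ Kc : ℝ) (hγ : 1 < γ) (hKc : 0 < Kc)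
    (U : Set (ℝ × ℝ)) (hU : IsOpen U)
    (u z m : ℝ × ℝ → ℝ)
    (hu : ContDiffOn ℝ 2 u U) (hz : ContDiffOn ℝ 2 z U) (hm : ContDiffOn ℝ 2 m U)
    (hzpos : ∀ pt ∈ U, 0 < z pt) (hmpos : ∀ pt ∈ U, 0 < m pt)
    (c p : ℝ × ℝ → ℝ)
    (hc : c = fun pt => Kc * m pt * z pt ^ ((γ + 1) / (γ - 1)))
    (hp : p = fun pt => ((γ - 1) / (2 * γ) * Kc) * (m pt) ^ 2 * z pt ^ (2 * γ / (γ - 1)))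
    (heq1 : ∀ pt ∈ U, pdt z pt + (c pt / m pt) * pdx u pt = 0)
    (heq2 : ∀ pt ∈ U, pdt u pt + m pt * c pt * pdx z pt + 2 * (p pt / m pt) * pdx m pt = 0)
    (heq3 : ∀ pt ∈ U, pdt m pt = 0)
    (α β : ℝ × ℝ → ℝ)
    (hα : α = fun pt => pdx u pt + m pt * pdx z pt + ((γ - 1) / γ) * pdx m pt * z pt)
    (hβ : β = fun pt => pdx u pt - m pt * pdx z pt - ((γ - 1) / γ) * pdx m pt * z pt)
    (yt qt : ℝ × ℝ → ℝ)
    (hyt : yt = fun pt => z pt ^ ((γ + 1) / (2 * (γ - 1))) * α pt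
      + ((γ - 1) / (γ * (3 * γ - 1))) * z pt ^ ((γ + 1) / (2 * (γ - 1)) + 1) * pdx m pt)
    (hqt : qt = fun pt => z pt ^ ((γ + 1) / (2 * (γ - 1))) * β pt
      - ((γ - 1) / (γ * (3 * γ - 1))) * z pt ^ ((γ + 1) / (2 * (γ - 1)) + 1) * pdx m pt)
    (yf qf : ℝ × ℝ → ℝ)
    (hyf : yf = fun pt => m pt ^ (-(3 * (3 - γ)) / (2 * (3 * γ - 1))) * yt pt)
    (hqf : qf = fun pt => m pt ^ (-(3 * (3 - γ)) / (2 * (3 * γ - 1))) * qt pt)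
    (Kτ : ℝ) (hKτ : 0 < Kτ)
    (τ : ℝ × ℝ → ℝ) (hτ : τ = fun pt => Kτ * z pt ^ (-2 / (γ - 1)))
    (ZL ZU ML MU M3 : ℝ) (hZL : 0 < ZL) (hZLU : ZL ≤ ZU) (hML : 0 < ML) (hMLU : ML ≤ MU)
    (hM3 : 0 < M3)
    (hzb : ∀ pt ∈ U, ZL ≤ z pt ∧ z pt ≤ ZU)
    (hmb : ∀ pt ∈ U, ML ≤ m pt ∧ m pt ≤ MU)
    (hmxb : ∀ pt ∈ U, |pdx m pt| ≤ M3)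
    (t₀ x₀ : ℝ) :
    (∀ V ∈ nhds ((t₀, x₀) : ℝ × ℝ), ¬ ∃ C : ℝ, ∀ pt ∈ V ∩ U, |pdx u pt| + |pdx τ pt| ≤ C) ↔
      (∀ V ∈ nhds ((t₀, x₀) : ℝ × ℝ), ¬ ∃ C : ℝ, ∀ pt ∈ V ∩ U, |yf pt| + |qf pt| ≤ C) := by
  have hγ0 : (0:ℝ) < γ := by linarith
  have hγ1 : (0:ℝ) < γ - 1 := by linarith
  have h3γ : (0:ℝ) < 3 * γ - 1 := by linarith
  set e : ℝ := -2 / (γ - 1) with he_def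
  set b : ℝ := (γ + 1) / (2 * (γ - 1)) with hb_def
  set a : ℝ := -(3 * (3 - γ)) / (2 * (3 * γ - 1)) with ha_def
  have he : e < 0 := div_neg_of_neg_of_pos (by norm_num) hγ1
  set K1 : ℝ := (γ - 1) / γ + (γ - 1) / (γ * (3 * γ - 1)) with hK1_def
  have hZU : (0:ℝ) < ZU := hZL.trans_le hZLU
  have hMU0 : (0:ℝ) < MU := hML.trans_le hMLU
  -- algebraic identities for yf, qf
  have hyfe : ∀ pt ∈ U, yf pt = (m pt ^ a * z pt ^ b) * pdx u pt
      + ((m pt ^ a * z pt ^ b) * m pt) * pdx z pt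
      + K1 * (m pt ^ a * (z pt ^ b * z pt)) * pdx m pt := by
    intro pt hpt
    have hzne : z pt ≠ 0 := (hzpos pt hpt).ne'
    simp only [hyf, hyt, hα]
    rw [Real.rpow_add_one hzne b, hK1_def]
    ring
  have hqfe : ∀ pt ∈ U, qf pt = (m pt ^ a * z pt ^ b) * pdx u pt
      - ((m pt ^ a * z pt ^ b) * m pt) * pdx z pt
      - K1 * (m pt ^ a * (z pt ^ b * z pt)) * pdx m pt := by
    intro pt hpt
    have hzne : z pt ≠ 0 := (hzpos pt hpt).ne'
    simp only [hqf, hqt, hβ]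
    rw [Real.rpow_add_one hzne b, hK1_def]
    ring
  -- derivative of τ
  have hτe : ∀ pt ∈ U, pdx τ pt = Kτ * e * z pt ^ (e - 1) * pdx z pt := by
    intro pt hpt
    have hzne : z pt ≠ 0 := (hzpos pt hpt).ne'
    have hdz : HasFDerivAt z (fderiv ℝ z pt) pt :=
      ((hz.contDiffAt (hU.mem_nhds hpt)).differentiableAt two_ne_zero).hasFDerivAt
    have h1 : HasFDerivAt (fun q => z q ^ e) ((e * z pt ^ (e - 1)) • fderiv ℝ z pt) pt :=
      hdz.rpow_const (Or.inl hzne)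
    have h2 : HasFDerivAt (fun q => Kτ * z q ^ e)
        (Kτ • ((e * z pt ^ (e - 1)) • fderiv ℝ z pt)) pt := h1.const_mul Kτ
    simp only [pdx]
    rw [hτ, h2.fderiv]
    simp only [ContinuousLinearMap.coe_smul', Pi.smul_apply, smul_eq_mul]
    ring
  -- bounds on the weight functions
  obtain ⟨Plo, Phi, Qhi, hPlo0, hPhi0, hQhi0, hPQ⟩ :
      ∃ Plo Phi Qhi : ℝ, 0 < Plo ∧ 0 < Phi ∧ 0 < Qhi ∧ ∀ pt ∈ U,
        Plo ≤ m pt ^ a * z pt ^ b ∧ m pt ^ a * z pt ^ b ≤ Phi ∧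
        m pt ^ a * (z pt ^ b * z pt) ≤ Qhi ∧ 0 < m pt ^ a * (z pt ^ b * z pt) := by
    have hmal : 0 < min (ML ^ a) (MU ^ a) :=
      lt_min (Real.rpow_pos_of_pos hML a) (Real.rpow_pos_of_pos hMU0 a)
    have hmah : 0 < max (ML ^ a) (MU ^ a) := hmal.trans_le (min_le_max)
    have hzbl : 0 < min (ZL ^ b) (ZU ^ b) :=
      lt_min (Real.rpow_pos_of_pos hZL b) (Real.rpow_pos_of_pos hZU b)
    have hzbh : 0 < max (ZL ^ b) (ZU ^ b) := hzbl.trans_le (min_le_max)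
    refine ⟨min (ML ^ a) (MU ^ a) * min (ZL ^ b) (ZU ^ b),
           max (ML ^ a) (MU ^ a) * max (ZL ^ b) (ZU ^ b),
           max (ML ^ a) (MU ^ a) * (max (ZL ^ b) (ZU ^ b) * ZU),
           mul_pos hmal hzbl, mul_pos hmah hzbh,
           mul_pos hmah (mul_pos hzbh hZU), ?_⟩
    intro pt hpt
    have hma := rpow_bnd_aux (s := a) hML (hmb pt hpt).1 (hmb pt hpt).2
    have hzbd := rpow_bnd_aux (s := b) hZL (hzb pt hpt).1 (hzb pt hpt).2
    have hz0 : 0 < z pt := hzpos pt hpt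
    have hma0 : 0 < m pt ^ a := Real.rpow_pos_of_pos (hmpos pt hpt) a
    have hzb0 : 0 < z pt ^ b := Real.rpow_pos_of_pos hz0 b
    refine ⟨mul_le_mul hma.1 hzbd.1 hzbl.le hma0.le,
            mul_le_mul hma.2 hzbd.2 hzb0.le hmah.le, ?_,
            mul_pos hma0 (mul_pos hzb0 hz0)⟩
    exact mul_le_mul hma.2
      (mul_le_mul hzbd.2 (hzb pt hpt).2 hz0.le hzbh.le)
      (mul_pos hzb0 hz0).le hmah.le
  -- bounds relating |τ_x| and |z_x|
  obtain ⟨cl, ch, hcl0, hch0, hcb⟩ :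
      ∃ cl ch : ℝ, 0 < cl ∧ 0 < ch ∧ ∀ pt ∈ U,
        cl * |pdx z pt| ≤ |pdx τ pt| ∧ |pdx τ pt| ≤ ch * |pdx z pt| := by
    have hKE : 0 < Kτ * -e := mul_pos hKτ (neg_pos.mpr he)
    have hel : 0 < min (ZL ^ (e - 1)) (ZU ^ (e - 1)) :=
      lt_min (Real.rpow_pos_of_pos hZL _) (Real.rpow_pos_of_pos hZU _)
    have heh : 0 < max (ZL ^ (e - 1)) (ZU ^ (e - 1)) := hel.trans_le (min_le_max)
    refine ⟨Kτ * -e * min (ZL ^ (e - 1)) (ZU ^ (e - 1)),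
            Kτ * -e * max (ZL ^ (e - 1)) (ZU ^ (e - 1)),
            mul_pos hKE hel, mul_pos hKE heh, ?_⟩
    intro pt hpt
    have hz0 : 0 < z pt := hzpos pt hpt
    have hzp : 0 < z pt ^ (e - 1) := Real.rpow_pos_of_pos hz0 (e - 1)
    have hzbd := rpow_bnd_aux (s := e - 1) hZL (hzb pt hpt).1 (hzb pt hpt).2
    have habs : |pdx τ pt| = Kτ * -e * z pt ^ (e - 1) * |pdx z pt| := by
      rw [hτe pt hpt, abs_mul]
      have hneg : Kτ * e * z pt ^ (e - 1) < 0 := by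
        have : Kτ * e < 0 := mul_neg_of_pos_of_neg hKτ he
        exact mul_neg_of_neg_of_pos this hzp
      rw [abs_of_neg hneg]
      ring
    rw [habs]
    constructor
    · apply mul_le_mul_of_nonneg_right _ (abs_nonneg _)
      exact mul_le_mul_of_nonneg_left hzbd.1 hKE.le
    · apply mul_le_mul_of_nonneg_right _ (abs_nonneg _)
      exact mul_le_mul_of_nonneg_left hzbd.2 hKE.le
  -- upper bounds on |yf|, |qf|
  have hthird : ∀ pt ∈ U, |K1 * (m pt ^ a * (z pt ^ b * z pt)) * pdx m pt|
      ≤ |K1| * Qhi * M3 := by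
    intro pt hpt
    obtain ⟨hP1, hP2, hQ, hQ0⟩ := hPQ pt hpt
    rw [abs_mul, abs_mul, abs_of_pos hQ0]
    exact mul_le_mul (mul_le_mul_of_nonneg_left hQ (abs_nonneg K1)) (hmxb pt hpt)
      (abs_nonneg _) (mul_nonneg (abs_nonneg _) hQhi0.le)
  have hyfb : ∀ pt ∈ U, |yf pt| ≤ Phi * |pdx u pt| + Phi * MU * |pdx z pt|
      + |K1| * Qhi * M3 := by
    intro pt hpt
    obtain ⟨hP1, hP2, hQ, hQ0⟩ := hPQ pt hpt
    have hPpos : 0 < m pt ^ a * z pt ^ b := hPlo0.trans_le hP1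
    have hm0 : 0 < m pt := hmpos pt hpt
    rw [hyfe pt hpt]
    refine (abs_add_three _ _ _).trans ?_
    have e1 : |(m pt ^ a * z pt ^ b) * pdx u pt| ≤ Phi * |pdx u pt| := by
      rw [abs_mul, abs_of_pos hPpos]
      exact mul_le_mul_of_nonneg_right hP2 (abs_nonneg _)
    have e2 : |((m pt ^ a * z pt ^ b) * m pt) * pdx z pt| ≤ Phi * MU * |pdx z pt| := by
      rw [abs_mul, abs_of_pos (mul_pos hPpos hm0)]
      exact mul_le_mul_of_nonneg_right
        (mul_le_mul hP2 (hmb pt hpt).2 hm0.le hPhi0.le) (abs_nonneg _)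
    linarith [hthird pt hpt]
  have hqfb : ∀ pt ∈ U, |qf pt| ≤ Phi * |pdx u pt| + Phi * MU * |pdx z pt|
      + |K1| * Qhi * M3 := by
    intro pt hpt
    obtain ⟨hP1, hP2, hQ, hQ0⟩ := hPQ pt hpt
    have hPpos : 0 < m pt ^ a * z pt ^ b := hPlo0.trans_le hP1
    have hm0 : 0 < m pt := hmpos pt hpt
    rw [hqfe pt hpt, show (m pt ^ a * z pt ^ b) * pdx u pt
        - ((m pt ^ a * z pt ^ b) * m pt) * pdx z pt
        - K1 * (m pt ^ a * (z pt ^ b * z pt)) * pdx m pt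
      = (m pt ^ a * z pt ^ b) * pdx u pt
        + (-(((m pt ^ a * z pt ^ b) * m pt) * pdx z pt))
        + (-(K1 * (m pt ^ a * (z pt ^ b * z pt)) * pdx m pt)) from by ring]
    refine (abs_add_three _ _ _).trans ?_
    rw [abs_neg, abs_neg]
    have e1 : |(m pt ^ a * z pt ^ b) * pdx u pt| ≤ Phi * |pdx u pt| := by
      rw [abs_mul, abs_of_pos hPpos]
      exact mul_le_mul_of_nonneg_right hP2 (abs_nonneg _)
    have e2 : |((m pt ^ a * z pt ^ b) * m pt) * pdx z pt| ≤ Phi * MU * |pdx z pt| := by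
      rw [abs_mul, abs_of_pos (mul_pos hPpos hm0)]
      exact mul_le_mul_of_nonneg_right
        (mul_le_mul hP2 (hmb pt hpt).2 hm0.le hPhi0.le) (abs_nonneg _)
    linarith [hthird pt hpt]
  -- lower bounds
  have hlow1 : ∀ pt ∈ U, 2 * Plo * |pdx u pt| ≤ |yf pt| + |qf pt| := by
    intro pt hpt
    obtain ⟨hP1, hP2, hQ, hQ0⟩ := hPQ pt hpt
    have hPpos : 0 < m pt ^ a * z pt ^ b := hPlo0.trans_le hP1
    have hsum : yf pt + qf pt = 2 * ((m pt ^ a * z pt ^ b) * pdx u pt) := by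
      rw [hyfe pt hpt, hqfe pt hpt]; ring
    have habs : |yf pt + qf pt| = 2 * ((m pt ^ a * z pt ^ b) * |pdx u pt|) := by
      rw [hsum, abs_mul, abs_mul, abs_of_pos hPpos]
      norm_num
    linarith [abs_add_le (yf pt) (qf pt),
      mul_le_mul_of_nonneg_right hP1 (abs_nonneg (pdx u pt)), habs]
  have hlow2 : ∀ pt ∈ U, 2 * (Plo * ML) * |pdx z pt|
      ≤ |yf pt| + |qf pt| + 2 * (|K1| * Qhi * M3) := by
    intro pt hpt
    obtain ⟨hP1, hP2, hQ, hQ0⟩ := hPQ pt hpt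
    have hPpos : 0 < m pt ^ a * z pt ^ b := hPlo0.trans_le hP1
    have hm0 : 0 < m pt := hmpos pt hpt
    have hdiff : yf pt - qf pt - 2 * (K1 * (m pt ^ a * (z pt ^ b * z pt)) * pdx m pt)
        = 2 * (((m pt ^ a * z pt ^ b) * m pt) * pdx z pt) := by
      rw [hyfe pt hpt, hqfe pt hpt]; ring
    have habs : |yf pt - qf pt - 2 * (K1 * (m pt ^ a * (z pt ^ b * z pt)) * pdx m pt)|
        = 2 * (((m pt ^ a * z pt ^ b) * m pt) * |pdx z pt|) := by
      rw [hdiff, abs_mul, abs_mul, abs_of_pos (mul_pos hPpos hm0)]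
      norm_num
    have htri : |yf pt - qf pt - 2 * (K1 * (m pt ^ a * (z pt ^ b * z pt)) * pdx m pt)|
        ≤ |yf pt| + |qf pt|
          + 2 * |K1 * (m pt ^ a * (z pt ^ b * z pt)) * pdx m pt| := by
      have t1 := abs_sub (yf pt - qf pt)
        (2 * (K1 * (m pt ^ a * (z pt ^ b * z pt)) * pdx m pt))
      have t2 := abs_sub (yf pt) (qf pt)
      have t3 : |2 * (K1 * (m pt ^ a * (z pt ^ b * z pt)) * pdx m pt)|
          = 2 * |K1 * (m pt ^ a * (z pt ^ b * z pt)) * pdx m pt| := by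
        rw [abs_mul]; norm_num
      linarith
    have hPm : Plo * ML ≤ (m pt ^ a * z pt ^ b) * m pt :=
      mul_le_mul hP1 (hmb pt hpt).1 hML.le hPpos.le
    linarith [hthird pt hpt, htri, habs,
      mul_le_mul_of_nonneg_right hPm (abs_nonneg (pdx z pt))]
  -- main equivalence
  constructor
  · intro h V hV hex
    obtain ⟨C, hC⟩ := hex
    apply h V hV
    refine ⟨max C 0 / (2 * Plo)
      + ch * ((max C 0 + 2 * (|K1| * Qhi * M3)) / (2 * (Plo * ML))), ?_⟩
    rintro pt ⟨hpt1, hpt2⟩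
    have hS : |yf pt| + |qf pt| ≤ max C 0 := (hC pt ⟨hpt1, hpt2⟩).trans (le_max_left C 0)
    have hux : |pdx u pt| ≤ max C 0 / (2 * Plo) := by
      rw [le_div_iff₀ (by positivity)]
      linarith [hlow1 pt hpt2]
    have hzx : |pdx z pt| ≤ (max C 0 + 2 * (|K1| * Qhi * M3)) / (2 * (Plo * ML)) := by
      rw [le_div_iff₀ (by positivity)]
      linarith [hlow2 pt hpt2]
    have hτx : |pdx τ pt|
        ≤ ch * ((max C 0 + 2 * (|K1| * Qhi * M3)) / (2 * (Plo * ML))) :=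
      (hcb pt hpt2).2.trans (mul_le_mul_of_nonneg_left hzx hch0.le)
    linarith
  · intro h V hV hex
    obtain ⟨C, hC⟩ := hex
    apply h V hV
    refine ⟨2 * (Phi * max C 0 + Phi * MU * (max C 0 / cl) + |K1| * Qhi * M3), ?_⟩
    rintro pt ⟨hpt1, hpt2⟩
    have hCpt : |pdx u pt| + |pdx τ pt| ≤ max C 0 :=
      (hC pt ⟨hpt1, hpt2⟩).trans (le_max_left C 0)
    have hux : |pdx u pt| ≤ max C 0 := by
      have := abs_nonneg (pdx τ pt); linarith
    have hτx : |pdx τ pt| ≤ max C 0 := by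
      have := abs_nonneg (pdx u pt); linarith
    have hzx : |pdx z pt| ≤ max C 0 / cl := by
      rw [le_div_iff₀ hcl0]
      have := (hcb pt hpt2).1
      linarith
    have t1 : Phi * |pdx u pt| ≤ Phi * max C 0 :=
      mul_le_mul_of_nonneg_left hux hPhi0.le
    have t2 : Phi * MU * |pdx z pt| ≤ Phi * MU * (max C 0 / cl) :=
      mul_le_mul_of_nonneg_left hzx (by positivity)
    linarith [hyfb pt hpt2, hqfb pt hpt2]
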